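/- Suppose sin α = 0 (so cos α ≠ 0). With φ₁ as above, there exist constants C, R > 0 such that for all s with |s| ≥ R and all x ∈ [-π,0]: |φ₁(x,λ) + (cos α/s)·sin(s(x+π))| ≤ C·|s|⁻²·e^{|t|(x+π)}. -/

import Mathlib

open Real Set

lemma sin_mul_abs_le (s : ℂ) (r : ℝ) (hr : 0 ≤ r) :
    ‖Complex.sin (s * r)‖ ≤ Real.exp (|s.im| * r) := by
  have h : Complex.sin (s * r) =
      (Complex.exp (-(s * r) * Complex.I) - Complex.exp (s * r * Complex.I)) * Complex.I / 2 := rfl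
  rw [h]
  rw [norm_div, norm_mul, Complex.norm_I, mul_one, Complex.norm_ofNat]
  have h1 : ‖Complex.exp (-(s * ↑r) * Complex.I)‖ = Real.exp (s.im * r) := by
    rw [Complex.norm_exp]; congr 1; simp [Complex.mul_re, Complex.mul_im]
  have h2 : ‖Complex.exp (s * ↑r * Complex.I)‖ = Real.exp (-(s.im * r)) := by
    rw [Complex.norm_exp]; congr 1; simp [Complex.mul_re, Complex.mul_im]
  have h3 : s.im * r ≤ |s.im| * r := mul_le_mul_of_nonneg_right (le_abs_self _) hr
  have h4 : -(s.im * r) ≤ |s.im| * r := by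
    have := mul_le_mul_of_nonneg_right (neg_abs_le s.im) hr
    linarith
  calc ‖Complex.exp (-(s * ↑r) * Complex.I) - Complex.exp (s * ↑r * Complex.I)‖ / 2
      ≤ (Real.exp (s.im * r) + Real.exp (-(s.im * r))) / 2 := by
        have h5 : ‖Complex.exp (-(s * ↑r) * Complex.I) - Complex.exp (s * ↑r * Complex.I)‖
            ≤ ‖Complex.exp (-(s * ↑r) * Complex.I)‖ + ‖Complex.exp (s * ↑r * Complex.I)‖ := by
          exact norm_sub_le (Complex.exp (-(s * ↑r) * Complex.I)) (Complex.exp (s * ↑r * Complex.I))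
        rw [h1, h2] at h5; linarith
    _ ≤ Real.exp (|s.im| * r) := by
        have := Real.exp_le_exp.mpr h3
        have := Real.exp_le_exp.mpr h4
        linarith

lemma volterra (q : ℝ → ℝ) (hq : ContinuousOn q (Set.Icc (-π) 0)) (s : ℂ)
    (f f' f'' : ℝ → ℂ)
    (hd : ∀ x ∈ Set.Icc (-π) 0, HasDerivWithinAt f (f' x) (Set.Icc (-π) 0) x)
    (hd' : ∀ x ∈ Set.Icc (-π) 0, HasDerivWithinAt f' (f'' x) (Set.Icc (-π) 0) x)
    (heq : ∀ x ∈ Set.Icc (-π) 0, f'' x = (q x : ℂ) * f x - s ^ 2 * f x)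
    (x : ℝ) (hx : x ∈ Set.Icc (-π) 0) :
    s * f x = f' (-π) * Complex.sin (s * (↑x + ↑π)) + s * f (-π) * Complex.cos (s * (↑x + ↑π))
      + ∫ τ in (-π)..x, (q τ : ℂ) * f τ * Complex.sin (s * ((x : ℂ) - ↑τ)) := by
  set W : ℝ → ℂ := fun τ =>
    f' τ * Complex.sin (s * ((x : ℂ) - ↑τ)) + s * (f τ * Complex.cos (s * ((x : ℂ) - ↑τ))) with hW
  have hsin : ∀ τ : ℝ, HasDerivAt (fun τ : ℝ => Complex.sin (s * ((x : ℂ) - ↑τ)))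
      (Complex.cos (s * ((x : ℂ) - ↑τ)) * (s * (-1))) τ := by
    intro τ
    have inner : HasDerivAt (fun z : ℂ => s * ((x : ℂ) - z)) (s * (-1)) (τ : ℂ) :=
      ((hasDerivAt_id (τ : ℂ)).const_sub (x : ℂ)).const_mul s
    exact ((Complex.hasDerivAt_sin (s * ((x : ℂ) - (τ : ℂ)))).comp (τ : ℂ) inner).comp_ofReal
  have hcos : ∀ τ : ℝ, HasDerivAt (fun τ : ℝ => Complex.cos (s * ((x : ℂ) - ↑τ)))
      (-Complex.sin (s * ((x : ℂ) - ↑τ)) * (s * (-1))) τ := by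
    intro τ
    have inner : HasDerivAt (fun z : ℂ => s * ((x : ℂ) - z)) (s * (-1)) (τ : ℂ) :=
      ((hasDerivAt_id (τ : ℂ)).const_sub (x : ℂ)).const_mul s
    exact ((Complex.hasDerivAt_cos (s * ((x : ℂ) - (τ : ℂ)))).comp (τ : ℂ) inner).comp_ofReal
  have hWd : ∀ τ ∈ Set.Icc (-π) 0, HasDerivWithinAt W
      ((q τ : ℂ) * f τ * Complex.sin (s * ((x : ℂ) - ↑τ))) (Set.Icc (-π) 0) τ := by
    intro τ hτ
    have h1 := (hd' τ hτ).mul (hsin τ).hasDerivWithinAt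
    have h2 := ((hd τ hτ).mul (hcos τ).hasDerivWithinAt).const_mul s
    have h3 := h1.add h2
    exact h3.congr_deriv (by rw [heq τ hτ]; ring)
  have hfc : ContinuousOn f (Set.Icc (-π) 0) := fun τ hτ => (hd τ hτ).continuousWithinAt
  have hWc : ContinuousOn W (Set.Icc (-π) 0) := fun τ hτ => (hWd τ hτ).continuousWithinAt
  have hgc : ContinuousOn (fun τ => (q τ : ℂ) * f τ * Complex.sin (s * ((x : ℂ) - ↑τ)))
      (Set.Icc (-π) 0) := by
    apply ContinuousOn.mul
    · exact (Complex.continuous_ofReal.comp_continuousOn hq).mul hfc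
    · exact Continuous.continuousOn (by fun_prop)
  have hsub : Set.Icc (-π) x ⊆ Set.Icc (-π) 0 := Set.Icc_subset_Icc_right hx.2
  have key : (∫ τ in (-π)..x, (q τ : ℂ) * f τ * Complex.sin (s * ((x : ℂ) - ↑τ)))
      = W x - W (-π) := by
    apply intervalIntegral.integral_eq_sub_of_hasDeriv_right_of_le hx.1
    · exact hWc.mono hsub
    · intro τ hτ
      exact (hWd τ ⟨hτ.1.le, hτ.2.le.trans hx.2⟩).mono_of_mem_nhdsWithin
        (Icc_mem_nhdsGT_of_mem ⟨hτ.1.le, lt_of_lt_of_le hτ.2 hx.2⟩)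
    · exact (hgc.mono hsub).intervalIntegrable_of_Icc hx.1
  have hWx : W x = s * f x := by
    simp [hW]
  have hWa : W (-π) = f' (-π) * Complex.sin (s * (↑x + ↑π))
      + s * f (-π) * Complex.cos (s * (↑x + ↑π)) := by
    simp only [hW]
    push_cast
    ring_nf
  rw [key, hWx, hWa]; ring

/-- Asymptotics of `φ₁` when `sin α = 0` (so `cos α ≠ 0`): for `λ = s²`,
`t = Im s`, `φ₁(x,λ) = -(cos α/s)·sin(s(x+π)) + O(|s|⁻² e^{|t|(x+π)})`
uniformly in `x ∈ [-π,0]` as `|s| → ∞`. -/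
theorem phi1_asymptotics_sin_eq_zero
    (q : ℝ → ℝ) (hq : ContinuousOn q (Set.Icc (-π) 0))
    (α : ℝ) (hα : Real.sin α = 0)
    (φ φ' φ'' : ℂ → ℝ → ℂ)
    (hd : ∀ s : ℂ, ∀ x ∈ Set.Icc (-π) 0,
      HasDerivWithinAt (φ s) (φ' s x) (Set.Icc (-π) 0) x)
    (hd' : ∀ s : ℂ, ∀ x ∈ Set.Icc (-π) 0,
      HasDerivWithinAt (φ' s) (φ'' s x) (Set.Icc (-π) 0) x)
    (heq : ∀ s : ℂ, ∀ x ∈ Set.Icc (-π) 0,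
      -φ'' s x + (q x : ℂ) * φ s x = s ^ 2 * φ s x)
    (hi : ∀ s : ℂ, φ s (-π) = 0)
    (hi' : ∀ s : ℂ, φ' s (-π) = -(Real.cos α : ℂ)) :
    ∃ C > 0, ∃ R > 0, ∀ s : ℂ, R ≤ ‖s‖ → ∀ x ∈ Set.Icc (-π) 0,
      ‖φ s x + ((Real.cos α : ℂ) / s) * Complex.sin (s * (x + π))‖
        ≤ C * (‖s‖)⁻¹ ^ 2 * Real.exp (|s.im| * (x + π)) := by
  have hπ : (0:ℝ) < π := Real.pi_pos
  have hne : (Set.Icc (-π) (0:ℝ)).Nonempty := Set.nonempty_Icc.mpr (by linarith)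
  obtain ⟨τK, hτK, hKmax⟩ := isCompact_Icc.exists_isMaxOn hne hq.abs
  set K := |q τK| with hKdef
  have hK0 : 0 ≤ K := abs_nonneg _
  have hKb : ∀ τ ∈ Set.Icc (-π) 0, |q τ| ≤ K := fun τ hτ => hKmax hτ
  refine ⟨2 * |Real.cos α| * K * π + 1, by positivity, 2 * K * π + 1, by positivity, ?_⟩
  intro s hs x hx
  have hA1 : (1:ℝ) ≤ ‖s‖ := le_trans (by nlinarith) hs
  have hA0 : (0:ℝ) < ‖s‖ := lt_of_lt_of_le one_pos hA1
  have hsne : s ≠ 0 := by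
    intro h; rw [h, norm_zero] at hA1; linarith
  have hfc : ContinuousOn (φ s) (Set.Icc (-π) 0) := fun τ hτ => (hd s τ hτ).continuousWithinAt
  -- the Volterra equation
  have hveq : ∀ y ∈ Set.Icc (-π) 0, s * φ s y
      = -(Real.cos α : ℂ) * Complex.sin (s * (↑y + ↑π))
        + ∫ τ in (-π)..y, (q τ : ℂ) * φ s τ * Complex.sin (s * ((y : ℂ) - ↑τ)) := by
    intro y hy
    have hv := volterra q hq s (φ s) (φ' s) (φ'' s) (hd s) (hd' s)
      (fun z hz => by linear_combination (-1 : ℂ) * heq s z hz) y hy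
    rw [hi s, hi' s] at hv
    simpa using hv
  -- maximum of the weighted function
  set g : ℝ → ℝ := fun y => ‖φ s y‖ * Real.exp (-(|s.im| * (y + π))) with hgdef
  have hgc : ContinuousOn g (Set.Icc (-π) 0) := by
    apply ContinuousOn.mul
    · exact continuous_norm.comp_continuousOn hfc
    · exact Continuous.continuousOn (by fun_prop)
  obtain ⟨x₀, hx₀, hmax⟩ := isCompact_Icc.exists_isMaxOn hne hgc
  set M := g x₀ with hMdef
  have hM0 : 0 ≤ M := mul_nonneg (norm_nonneg _) (Real.exp_pos _).le
  have hfb : ∀ y ∈ Set.Icc (-π) 0,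
      ‖φ s y‖ ≤ M * Real.exp (|s.im| * (y + π)) := by
    intro y hy
    have h := hmax hy
    have e1 : Real.exp (-(|s.im| * (y + π))) * Real.exp (|s.im| * (y + π)) = 1 := by
      rw [← Real.exp_add]; simp
    have := mul_le_mul_of_nonneg_right h (Real.exp_pos (|s.im| * (y + π))).le
    calc ‖φ s y‖
        = g y * Real.exp (|s.im| * (y + π)) := by
          rw [hgdef]; simp only []; rw [mul_assoc, e1, mul_one]
      _ ≤ M * Real.exp (|s.im| * (y + π)) :=
          mul_le_mul_of_nonneg_right h (Real.exp_pos _).le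
  -- bound on the integral term
  have Ib : ∀ y ∈ Set.Icc (-π) 0,
      ‖∫ τ in (-π)..y, (q τ : ℂ) * φ s τ * Complex.sin (s * ((y : ℂ) - ↑τ))‖
        ≤ K * M * π * Real.exp (|s.im| * (y + π)) := by
    intro y hy
    have hb : ∀ τ ∈ Set.uIoc (-π) y,
        ‖(q τ : ℂ) * φ s τ * Complex.sin (s * ((y : ℂ) - ↑τ))‖
          ≤ K * (M * Real.exp (|s.im| * (y + π))) := by
      intro τ hτ
      rw [Set.uIoc_of_le hy.1] at hτ
      have hτI : τ ∈ Set.Icc (-π) 0 := ⟨hτ.1.le, hτ.2.trans hy.2⟩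
      have hs1 : ‖Complex.sin (s * ((y : ℂ) - ↑τ))‖
          ≤ Real.exp (|s.im| * (y - τ)) := by
        have : s * ((y : ℂ) - ↑τ) = s * ((y - τ : ℝ) : ℂ) := by push_cast; ring
        rw [this]
        exact sin_mul_abs_le s (y - τ) (by linarith [hτ.2])
      have hq1 : ‖(q τ : ℂ)‖ ≤ K := by
        rw [Complex.norm_real, Real.norm_eq_abs]; exact hKb τ hτI
      have hf1 := hfb τ hτI
      have eadd : Real.exp (|s.im| * (τ + π)) * Real.exp (|s.im| * (y - τ))
          = Real.exp (|s.im| * (y + π)) := by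
        rw [← Real.exp_add]; congr 1; ring
      calc ‖(q τ : ℂ) * φ s τ * Complex.sin (s * ((y : ℂ) - ↑τ))‖
          = ‖(q τ : ℂ)‖ * ‖φ s τ‖
              * ‖Complex.sin (s * ((y : ℂ) - ↑τ))‖ := by
            rw [norm_mul, norm_mul]
        _ ≤ K * (M * Real.exp (|s.im| * (τ + π))) * Real.exp (|s.im| * (y - τ)) := by
            apply mul_le_mul _ hs1 (norm_nonneg _) (by positivity)
            exact mul_le_mul hq1 hf1 (norm_nonneg _) hK0
        _ = K * (M * Real.exp (|s.im| * (y + π))) := by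
            rw [mul_assoc, mul_assoc, eadd]
    have h2 := intervalIntegral.norm_integral_le_of_norm_le_const hb
    have habs : |y - (-π)| ≤ π := by
      rw [abs_of_nonneg (by linarith [hy.1])]; linarith [hy.2]
    calc ‖∫ τ in (-π)..y, (q τ : ℂ) * φ s τ * Complex.sin (s * ((y : ℂ) - ↑τ))‖
        ≤ K * (M * Real.exp (|s.im| * (y + π))) * |y - (-π)| := h2
      _ ≤ K * M * π * Real.exp (|s.im| * (y + π)) := by
          nlinarith [mul_le_mul_of_nonneg_left habs
            (mul_nonneg (mul_nonneg hK0 hM0) (Real.exp_pos (|s.im| * (y + π))).le)]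
  -- Gronwall-type bound
  have hsM : ‖s‖ * M ≤ |Real.cos α| + K * M * π := by
    have h1 : ‖s‖ * ‖φ s x₀‖
        ≤ (|Real.cos α| + K * M * π) * Real.exp (|s.im| * (x₀ + π)) := by
      have hv := hveq x₀ hx₀
      have h2 : ‖s * φ s x₀‖
          ≤ ‖-(Real.cos α : ℂ) * Complex.sin (s * (↑x₀ + ↑π))‖
            + ‖∫ τ in (-π)..x₀, (q τ : ℂ) * φ s τ
                * Complex.sin (s * ((x₀ : ℂ) - ↑τ))‖ := by
        rw [hv]; exact norm_add_le _ _
      rw [norm_mul] at h2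
      have h3 : ‖-(Real.cos α : ℂ) * Complex.sin (s * (↑x₀ + ↑π))‖
          ≤ |Real.cos α| * Real.exp (|s.im| * (x₀ + π)) := by
        rw [norm_mul, norm_neg, Complex.norm_real, Real.norm_eq_abs]
        apply mul_le_mul_of_nonneg_left _ (abs_nonneg _)
        have : s * ((x₀ : ℂ) + ↑π) = s * ((x₀ + π : ℝ) : ℂ) := by push_cast; ring
        rw [this]
        exact sin_mul_abs_le s (x₀ + π) (by linarith [hx₀.1])
      have h4 := Ib x₀ hx₀
      calc ‖s‖ * ‖φ s x₀‖
          ≤ |Real.cos α| * Real.exp (|s.im| * (x₀ + π))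
            + K * M * π * Real.exp (|s.im| * (x₀ + π)) := by linarith
        _ = (|Real.cos α| + K * M * π) * Real.exp (|s.im| * (x₀ + π)) := by ring
    have e1 : Real.exp (|s.im| * (x₀ + π)) * Real.exp (-(|s.im| * (x₀ + π))) = 1 := by
      rw [← Real.exp_add]; simp
    have h5 := mul_le_mul_of_nonneg_right h1 (Real.exp_pos (-(|s.im| * (x₀ + π)))).le
    rw [mul_assoc, mul_assoc, e1, mul_one] at h5
    calc ‖s‖ * M
        = ‖s‖ * (‖φ s x₀‖ * Real.exp (-(|s.im| * (x₀ + π)))) := rfl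
      _ ≤ |Real.cos α| + K * M * π := h5
  have hMb : M * ‖s‖ ≤ 2 * |Real.cos α| := by
    nlinarith [mul_le_mul_of_nonneg_left hs hM0]
  have hMA : M ≤ 2 * |Real.cos α| * (‖s‖)⁻¹ := by
    rw [mul_comm] at hMb
    rw [← div_eq_mul_inv, le_div_iff₀ hA0]
    linarith
  -- final estimate
  have hveqx := hveq x hx
  have hrw : φ s x + ((Real.cos α : ℂ) / s) * Complex.sin (s * (↑x + ↑π))
      = (∫ τ in (-π)..x, (q τ : ℂ) * φ s τ * Complex.sin (s * ((x : ℂ) - ↑τ))) / s := by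
    field_simp
    linear_combination hveqx
  rw [hrw, norm_div]
  have hInt := Ib x hx
  have hinv0 : (0:ℝ) ≤ (‖s‖)⁻¹ := inv_nonneg.mpr hA0.le
  calc ‖∫ τ in (-π)..x, (q τ : ℂ) * φ s τ * Complex.sin (s * ((x : ℂ) - ↑τ))‖
        / ‖s‖
      = ‖∫ τ in (-π)..x, (q τ : ℂ) * φ s τ * Complex.sin (s * ((x : ℂ) - ↑τ))‖
        * (‖s‖)⁻¹ := by rw [div_eq_mul_inv]
    _ ≤ (K * M * π * Real.exp (|s.im| * (x + π))) * (‖s‖)⁻¹ :=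
        mul_le_mul_of_nonneg_right hInt hinv0
    _ ≤ (K * (2 * |Real.cos α| * (‖s‖)⁻¹) * π * Real.exp (|s.im| * (x + π)))
        * (‖s‖)⁻¹ := by
        apply mul_le_mul_of_nonneg_right _ hinv0
        have he := (Real.exp_pos (|s.im| * (x + π))).le
        apply mul_le_mul_of_nonneg_right _ he
        apply mul_le_mul_of_nonneg_right _ hπ.le
        exact mul_le_mul_of_nonneg_left hMA hK0
    _ = (2 * |Real.cos α| * K * π) * (‖s‖)⁻¹ ^ 2
        * Real.exp (|s.im| * (x + π)) := by ring
    _ ≤ (2 * |Real.cos α| * K * π + 1) * (‖s‖)⁻¹ ^ 2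
        * Real.exp (|s.im| * (x + π)) := by
        apply mul_le_mul_of_nonneg_right _ (Real.exp_pos _).le
        apply mul_le_mul_of_nonneg_right _ (by positivity)
        linarith
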